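/- Let n ≥ 2 and let A be an n×n Hermitian matrix. After applying to A the N = n(n-1)/2 complex Jacobi rotations of one sweep in the column-cyclic order (1,2),(1,3),(2,3),...,(1,n),...,(n-1,n), where each rotation annihilates the current pivot element and has rotation angle φ_k with |cos φ_k| ≥ ν > 0, the resulting matrix A' satisfies S(A')^2 ≤ γ_{n,ν} S(A)^2 for a constant 0 ≤ γ_{n,ν} < 1 depending only on n and ν (not on A). -/

import Mathlib

open Matrix

/-- The complex plane rotation `R(i,j,φ,α)`. -/
noncomputable def planeRot (n : ℕ) (i j : Fin n) (φ α : ℝ) : Matrix (Fin n) (Fin n) ℂ :=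
  fun r t =>
    if r = i ∧ t = i then (Real.cos φ : ℂ)
    else if r = i ∧ t = j then -Complex.exp (α * Complex.I) * Real.sin φ
    else if r = j ∧ t = i then Complex.exp (-α * Complex.I) * Real.sin φ
    else if r = j ∧ t = j then (Real.cos φ : ℂ)
    else if r = t then 1 else 0

/-- Squared off-norm `S(X)²`. -/
noncomputable def offNormSq {n : ℕ} (X : Matrix (Fin n) (Fin n) ℂ) : ℝ :=
  ∑ r : Fin n, ∑ t : Fin n, if r = t then 0 else ‖X r t‖ ^ 2

/-- The column-cyclic pivot ordering `(1,2),(1,3),(2,3),…,(1,n),…,(n-1,n)`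
(with indices here starting from `0`). -/
def colCyclicPairs (n : ℕ) : List (Fin n × Fin n) :=
  (List.finRange n).flatMap fun j =>
    ((List.finRange n).filter fun i => i < j).map fun i => (i, j)


open Complex

section rot
variable {n : ℕ} (i j : Fin n) (hij : i ≠ j) (φ α : ℝ)

local notation "c" => (Real.cos φ : ℂ)
local notation "s" => (Real.sin φ : ℂ)
local notation "ep" => Complex.exp (α * Complex.I)
local notation "em" => Complex.exp (-α * Complex.I)

lemma planeRot_apply (r t : Fin n) : planeRot n i j φ α r t =
    if r = i ∧ t = i then c
    else if r = i ∧ t = j then -ep * s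
    else if r = j ∧ t = i then em * s
    else if r = j ∧ t = j then c
    else if r = t then 1 else 0 := rfl

include hij

-- column i of R
lemma R_col_i (b : Fin n) : planeRot n i j φ α b i =
    if b = i then c else if b = j then em * s else 0 := by
  rw [planeRot_apply]
  by_cases h1 : b = i <;> by_cases h2 : b = j <;>
    simp_all [hij, Ne.symm hij]

lemma R_col_j (b : Fin n) : planeRot n i j φ α b j =
    if b = i then -ep * s else if b = j then c else 0 := by
  rw [planeRot_apply]
  by_cases h1 : b = i <;> by_cases h2 : b = j <;>
    simp_all [hij, Ne.symm hij]

lemma R_col_other (t : Fin n) (hti : t ≠ i) (htj : t ≠ j) (b : Fin n) :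
    planeRot n i j φ α b t = if b = t then 1 else 0 := by
  rw [planeRot_apply]
  by_cases h1 : b = i <;> by_cases h2 : b = j <;> by_cases h3 : b = t <;>
    simp_all [hij, Ne.symm hij]

end rot

section rot2
variable {n : ℕ} (i j : Fin n) (hij : i ≠ j) (φ α : ℝ)

local notation "c" => (Real.cos φ : ℂ)
local notation "s" => (Real.sin φ : ℂ)
local notation "ep" => Complex.exp (α * Complex.I)
local notation "em" => Complex.exp (-α * Complex.I)
local notation "R" => planeRot n i j φ α

lemma conj_c : (starRingEnd ℂ) c = c := Complex.conj_ofReal _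
lemma conj_s : (starRingEnd ℂ) s = s := Complex.conj_ofReal _
lemma conj_ep : (starRingEnd ℂ) ep = em := by
  rw [← Complex.exp_conj]
  congr 1
  rw [RingHom.map_mul, Complex.conj_I, Complex.conj_ofReal]
  ring
lemma conj_em : (starRingEnd ℂ) em = ep := by
  rw [← Complex.exp_conj]
  congr 1
  rw [RingHom.map_mul, Complex.conj_I, RingHom.map_neg, Complex.conj_ofReal]
  ring

include hij

lemma mulR_col_i (A : Matrix (Fin n) (Fin n) ℂ) (r : Fin n) :
    (A * R) r i = c * A r i + em * s * A r j := by
  rw [Matrix.mul_apply]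
  have : ∀ b : Fin n, A r b * R b i
      = (if b = i then c * A r i else 0) + (if b = j then em * s * A r j else 0) := by
    intro b
    rw [R_col_i i j hij]
    by_cases h1 : b = i <;> by_cases h2 : b = j <;> simp_all [hij] <;> ring
  rw [Finset.sum_congr rfl fun b _ => this b, Finset.sum_add_distrib]
  simp

lemma mulR_col_j (A : Matrix (Fin n) (Fin n) ℂ) (r : Fin n) :
    (A * R) r j = -ep * s * A r i + c * A r j := by
  rw [Matrix.mul_apply]
  have : ∀ b : Fin n, A r b * R b j
      = (if b = i then -ep * s * A r i else 0) + (if b = j then c * A r j else 0) := by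
    intro b
    rw [R_col_j i j hij]
    by_cases h1 : b = i <;> by_cases h2 : b = j <;> simp_all [hij] <;> ring
  rw [Finset.sum_congr rfl fun b _ => this b, Finset.sum_add_distrib]
  simp

lemma mulR_col_other (A : Matrix (Fin n) (Fin n) ℂ) (r t : Fin n) (hti : t ≠ i) (htj : t ≠ j) :
    (A * R) r t = A r t := by
  rw [Matrix.mul_apply]
  have : ∀ b : Fin n, A r b * R b t = if b = t then A r t else 0 := by
    intro b
    rw [R_col_other i j hij φ α t hti htj]
    by_cases h3 : b = t <;> simp_all
  rw [Finset.sum_congr rfl fun b _ => this b]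
  simp

lemma conjR_row_i (M : Matrix (Fin n) (Fin n) ℂ) (t : Fin n) :
    (Rᴴ * M) i t = c * M i t + ep * s * M j t := by
  rw [Matrix.mul_apply]
  have : ∀ a : Fin n, Rᴴ i a * M a t
      = (if a = i then c * M i t else 0) + (if a = j then ep * s * M j t else 0) := by
    intro a
    rw [Matrix.conjTranspose_apply, ← starRingEnd_apply, R_col_i i j hij]
    by_cases h1 : a = i
    · subst h1
      rw [if_pos rfl, if_pos rfl, if_neg hij, conj_c φ]
      ring
    · rw [if_neg h1, if_neg h1]
      by_cases h2 : a = j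
      · subst h2
        rw [if_pos rfl, if_pos rfl, RingHom.map_mul, conj_em α, conj_s φ]
        ring
      · rw [if_neg h2, if_neg h2, RingHom.map_zero]
        ring
  rw [Finset.sum_congr rfl fun b _ => this b, Finset.sum_add_distrib]
  simp

lemma conjR_row_j (M : Matrix (Fin n) (Fin n) ℂ) (t : Fin n) :
    (Rᴴ * M) j t = -em * s * M i t + c * M j t := by
  rw [Matrix.mul_apply]
  have : ∀ a : Fin n, Rᴴ j a * M a t
      = (if a = i then -em * s * M i t else 0) + (if a = j then c * M j t else 0) := by
    intro a
    rw [Matrix.conjTranspose_apply, ← starRingEnd_apply, R_col_j i j hij]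
    by_cases h1 : a = i
    · subst h1
      rw [if_pos rfl, if_neg hij, if_pos rfl, RingHom.map_mul, RingHom.map_neg, conj_ep α, conj_s φ]
      ring
    · rw [if_neg h1, if_neg h1]
      by_cases h2 : a = j
      · subst h2
        rw [if_pos rfl, if_pos rfl, conj_c φ]
        ring
      · rw [if_neg h2, if_neg h2, RingHom.map_zero]
        ring
  rw [Finset.sum_congr rfl fun b _ => this b, Finset.sum_add_distrib]
  simp

lemma conjR_row_other (M : Matrix (Fin n) (Fin n) ℂ) (r t : Fin n) (hri : r ≠ i) (hrj : r ≠ j) :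
    (Rᴴ * M) r t = M r t := by
  rw [Matrix.mul_apply]
  have : ∀ a : Fin n, Rᴴ r a * M a t = if a = r then M r t else 0 := by
    intro a
    rw [Matrix.conjTranspose_apply, ← starRingEnd_apply, R_col_other i j hij φ α r hri hrj]
    by_cases h3 : a = r <;> simp_all
  rw [Finset.sum_congr rfl fun b _ => this b]
  simp

end rot2


lemma two_isometry (a b d f x y : ℂ) (h1 : ‖a‖^2 + ‖d‖^2 = 1) (h2 : ‖b‖^2 + ‖f‖^2 = 1)
    (h3 : a * (starRingEnd ℂ) b + d * (starRingEnd ℂ) f = 0) :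
    ‖a*x + b*y‖^2 + ‖d*x + f*y‖^2 = ‖x‖^2 + ‖y‖^2 := by
  have e1 : ∀ z : ℂ, ‖z‖^2 = Complex.normSq z := fun z => by
    rw [Complex.sq_norm]
  simp only [e1] at h1 h2 ⊢
  rw [Complex.normSq_add, Complex.normSq_add, Complex.normSq_mul, Complex.normSq_mul,
    Complex.normSq_mul, Complex.normSq_mul]
  have key : (a*x * (starRingEnd ℂ) (b*y)).re + (d*x*(starRingEnd ℂ) (f*y)).re
      = ((a * (starRingEnd ℂ) b + d * (starRingEnd ℂ) f) * (x * (starRingEnd ℂ) y)).re := by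
    rw [_root_.map_mul, _root_.map_mul]
    rw [← Complex.add_re]
    ring_nf
  have : (a*x * (starRingEnd ℂ) (b*y)).re + (d*x*(starRingEnd ℂ) (f*y)).re = 0 := by
    rw [key, h3, zero_mul, Complex.zero_re]
  nlinarith [Complex.normSq_nonneg x, Complex.normSq_nonneg y]

section rot3
variable {n : ℕ} (i j : Fin n) (hij : i ≠ j) (φ α : ℝ)

local notation "c" => (Real.cos φ : ℂ)
local notation "s" => (Real.sin φ : ℂ)
local notation "ep" => Complex.exp (α * Complex.I)
local notation "em" => Complex.exp (-α * Complex.I)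
local notation "R" => planeRot n i j φ α

lemma norm_ep : ‖ep‖ = 1 := by
  rw [Complex.norm_exp]
  simp
lemma norm_em : ‖em‖ = 1 := by
  rw [Complex.norm_exp]
  simp
lemma norm_c_sq : ‖c‖^2 = Real.cos φ ^ 2 := by
  rw [Complex.norm_real, Real.norm_eq_abs, _root_.sq_abs]
lemma norm_s_sq : ‖s‖^2 = Real.sin φ ^ 2 := by
  rw [Complex.norm_real, Real.norm_eq_abs, _root_.sq_abs]
lemma ep_mul_em : ep * em = 1 := by
  rw [← Complex.exp_add]
  simp

include hij

lemma rot_pair_iso_row (A : Matrix (Fin n) (Fin n) ℂ) (t : Fin n) :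
    ‖(Rᴴ * A) i t‖^2 + ‖(Rᴴ * A) j t‖^2 = ‖A i t‖^2 + ‖A j t‖^2 := by
  rw [conjR_row_i i j hij, conjR_row_j i j hij]
  apply two_isometry
  · rw [norm_c_sq, norm_mul, norm_neg, norm_em, Complex.norm_real, one_mul, Real.norm_eq_abs, _root_.sq_abs]
    exact Real.cos_sq_add_sin_sq φ
  · rw [norm_c_sq, norm_mul, norm_ep, Complex.norm_real, one_mul, Real.norm_eq_abs, _root_.sq_abs]
    exact Real.sin_sq_add_cos_sq φ
  · rw [RingHom.map_mul, conj_ep α, conj_c φ, conj_s φ]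
    ring
lemma rot_pair_iso_col (A : Matrix (Fin n) (Fin n) ℂ) (r : Fin n) :
    ‖(A * R) r i‖^2 + ‖(A * R) r j‖^2 = ‖A r i‖^2 + ‖A r j‖^2 := by
  rw [mulR_col_i i j hij, mulR_col_j i j hij]
  apply two_isometry
  · rw [norm_c_sq, norm_mul, norm_neg, norm_ep, Complex.norm_real, one_mul, Real.norm_eq_abs, _root_.sq_abs]
    exact Real.cos_sq_add_sin_sq φ
  · rw [norm_c_sq, norm_mul, norm_em, Complex.norm_real, one_mul, Real.norm_eq_abs, _root_.sq_abs]
    exact Real.sin_sq_add_cos_sq φ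
  · rw [RingHom.map_mul, conj_em α, conj_c φ, conj_s φ]
    ring
end rot3

noncomputable def Soff {n : ℕ} (S : Finset (Fin n)) (X : Matrix (Fin n) (Fin n) ℂ) : ℝ :=
  ∑ r ∈ S, ∑ t ∈ S, if r = t then 0 else ‖X r t‖^2

noncomputable def Fro {n : ℕ} (S : Finset (Fin n)) (X : Matrix (Fin n) (Fin n) ℂ) : ℝ :=
  ∑ r ∈ S, ∑ t ∈ S, ‖X r t‖^2

lemma sum_pair_split {n : ℕ} {β : Type*} [AddCommMonoid β] (S : Finset (Fin n)) (i j : Fin n)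
    (hij : i ≠ j) (hi : i ∈ S) (hj : j ∈ S) (f : Fin n → β) :
    ∑ x ∈ S, f x = f i + f j + ∑ x ∈ (S.erase i).erase j, f x := by
  have h1 := Finset.sum_erase_add S f hi
  have h2 := Finset.sum_erase_add (S.erase i) f (Finset.mem_erase.mpr ⟨Ne.symm hij, hj⟩)
  rw [← h1, ← h2]
  abel

lemma Soff_eq_Fro {n : ℕ} (S : Finset (Fin n)) (X : Matrix (Fin n) (Fin n) ℂ) :
    Soff S X = Fro S X - ∑ t ∈ S, ‖X t t‖^2 := by
  unfold Soff Fro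
  rw [← Finset.sum_sub_distrib]
  apply Finset.sum_congr rfl
  intro r hr
  have : ∀ t ∈ S, (if r = t then 0 else ‖X r t‖^2) = ‖X r t‖^2 - (if t = r then ‖X r t‖^2 else 0) := by
    intro t _
    by_cases h : r = t
    · subst h; simp
    · rw [if_neg h, if_neg (Ne.symm h)]; ring
  rw [Finset.sum_congr rfl this, Finset.sum_sub_distrib, Finset.sum_ite_eq' S r (fun t => ‖X r t‖^2)]
  rw [if_pos hr]

section step
variable {n : ℕ} (i j : Fin n) (hij : i ≠ j) (φ α : ℝ)

local notation "c" => (Real.cos φ : ℂ)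
local notation "s" => (Real.sin φ : ℂ)
local notation "ep" => Complex.exp (α * Complex.I)
local notation "R" => planeRot n i j φ α

include hij

lemma step_unchanged (A : Matrix (Fin n) (Fin n) ℂ) (r t : Fin n)
    (hri : r ≠ i) (hrj : r ≠ j) (hti : t ≠ i) (htj : t ≠ j) :
    (Rᴴ * A * R) r t = A r t := by
  rw [mulR_col_other i j hij φ α _ r t hti htj, conjR_row_other i j hij φ α _ r t hri hrj]

lemma step_update (A : Matrix (Fin n) (Fin n) ℂ) (r : Fin n) (hri : r ≠ i) (hrj : r ≠ j) :
    (Rᴴ * A * R) r j = -ep * s * A r i + c * A r j := by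
  rw [mulR_col_j i j hij, conjR_row_other i j hij φ α _ r i hri hrj,
    conjR_row_other i j hij φ α _ r j hri hrj]

lemma step_rowpair (A : Matrix (Fin n) (Fin n) ℂ) (t : Fin n) (hti : t ≠ i) (htj : t ≠ j) :
    ‖(Rᴴ * A * R) i t‖^2 + ‖(Rᴴ * A * R) j t‖^2 = ‖A i t‖^2 + ‖A j t‖^2 := by
  rw [mulR_col_other i j hij φ α _ i t hti htj, mulR_col_other i j hij φ α _ j t hti htj]
  exact rot_pair_iso_row i j hij φ α A t

lemma step_block (A : Matrix (Fin n) (Fin n) ℂ) :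
    ‖(Rᴴ * A * R) i i‖^2 + ‖(Rᴴ * A * R) i j‖^2 + ‖(Rᴴ * A * R) j i‖^2 + ‖(Rᴴ * A * R) j j‖^2
      = ‖A i i‖^2 + ‖A i j‖^2 + ‖A j i‖^2 + ‖A j j‖^2 := by
  have h1 := rot_pair_iso_col i j hij φ α (Rᴴ * A) i
  have h2 := rot_pair_iso_col i j hij φ α (Rᴴ * A) j
  have h3 := rot_pair_iso_row i j hij φ α A i
  have h4 := rot_pair_iso_row i j hij φ α A j
  linarith

lemma step_col_preserve (A : Matrix (Fin n) (Fin n) ℂ) (t₀ : Fin n) (ht0i : t₀ ≠ i)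
    (ht0j : t₀ ≠ j) (S : Finset (Fin n)) (hi : i ∈ S) (hj : j ∈ S) :
    ∑ r ∈ S, ‖(Rᴴ * A * R) r t₀‖^2 = ∑ r ∈ S, ‖A r t₀‖^2 := by
  rw [sum_pair_split S i j hij hi hj, sum_pair_split S i j hij hi hj (fun r => ‖A r t₀‖^2)]
  have hrest : ∑ r ∈ (S.erase i).erase j, ‖(Rᴴ * A * R) r t₀‖^2
      = ∑ r ∈ (S.erase i).erase j, ‖A r t₀‖^2 := by
    apply Finset.sum_congr rfl
    intro r hr
    have hrj' : r ≠ j := (Finset.mem_erase.mp hr).1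
    have hri' : r ≠ i := (Finset.mem_erase.mp (Finset.mem_erase.mp hr).2).1
    rw [step_unchanged i j hij φ α A r t₀ hri' hrj' ht0i ht0j]
  have hpair : ‖(Rᴴ * A * R) i t₀‖^2 + ‖(Rᴴ * A * R) j t₀‖^2 = ‖A i t₀‖^2 + ‖A j t₀‖^2 :=
    step_rowpair i j hij φ α A t₀ ht0i ht0j
  linarith

lemma step_Fro (A : Matrix (Fin n) (Fin n) ℂ) (S : Finset (Fin n)) (hi : i ∈ S) (hj : j ∈ S) :
    Fro S (Rᴴ * A * R) = Fro S A := by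
  have colstep : ∀ r : Fin n, ∑ t ∈ S, ‖(Rᴴ * A * R) r t‖^2 = ∑ t ∈ S, ‖(Rᴴ * A) r t‖^2 := by
    intro r
    rw [sum_pair_split S i j hij hi hj, sum_pair_split S i j hij hi hj (fun t => ‖(Rᴴ * A) r t‖^2)]
    have hrest : ∑ t ∈ (S.erase i).erase j, ‖(Rᴴ * A * R) r t‖^2
        = ∑ t ∈ (S.erase i).erase j, ‖(Rᴴ * A) r t‖^2 := by
      apply Finset.sum_congr rfl
      intro t ht
      have htj' : t ≠ j := (Finset.mem_erase.mp ht).1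
      have hti' : t ≠ i := (Finset.mem_erase.mp (Finset.mem_erase.mp ht).2).1
      rw [mulR_col_other i j hij φ α _ r t hti' htj']
    have hpair := rot_pair_iso_col i j hij φ α (Rᴴ * A) r
    linarith
  have rowstep : ∀ t ∈ S, ∑ r ∈ S, ‖(Rᴴ * A) r t‖^2 = ∑ r ∈ S, ‖A r t‖^2 := by
    intro t _
    rw [sum_pair_split S i j hij hi hj, sum_pair_split S i j hij hi hj (fun r => ‖A r t‖^2)]
    have hrest : ∑ r ∈ (S.erase i).erase j, ‖(Rᴴ * A) r t‖^2
        = ∑ r ∈ (S.erase i).erase j, ‖A r t‖^2 := by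
      apply Finset.sum_congr rfl
      intro r hr
      have hrj' : r ≠ j := (Finset.mem_erase.mp hr).1
      have hri' : r ≠ i := (Finset.mem_erase.mp (Finset.mem_erase.mp hr).2).1
      rw [conjR_row_other i j hij φ α _ r t hri' hrj']
    have hpair := rot_pair_iso_row i j hij φ α A t
    linarith
  unfold Fro
  rw [Finset.sum_congr rfl (fun r _ => colstep r), Finset.sum_comm,
    Finset.sum_congr rfl rowstep, Finset.sum_comm]

lemma step_drop (A : Matrix (Fin n) (Fin n) ℂ) (S : Finset (Fin n)) (hi : i ∈ S) (hj : j ∈ S)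
    (hz : (Rᴴ * A * R) i j = 0) (hz' : (Rᴴ * A * R) j i = 0) :
    Soff S (Rᴴ * A * R) = Soff S A - ‖A i j‖^2 - ‖A j i‖^2 := by
  have hF := step_Fro i j hij φ α A S hi hj
  have hblock := step_block i j hij φ α A
  rw [hz, hz'] at hblock
  simp only [norm_zero] at hblock
  have hdiagrest : ∑ t ∈ (S.erase i).erase j, ‖(Rᴴ * A * R) t t‖^2
      = ∑ t ∈ (S.erase i).erase j, ‖A t t‖^2 := by
    apply Finset.sum_congr rfl
    intro t ht
    have htj' : t ≠ j := (Finset.mem_erase.mp ht).1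
    have hti' : t ≠ i := (Finset.mem_erase.mp (Finset.mem_erase.mp ht).2).1
    rw [step_unchanged i j hij φ α A t t hti' htj' hti' htj']
  rw [Soff_eq_Fro, Soff_eq_Fro, hF,
    sum_pair_split S i j hij hi hj (fun t => ‖(Rᴴ * A * R) t t‖^2),
    sum_pair_split S i j hij hi hj (fun t => ‖A t t‖^2), hdiagrest]
  linarith

omit hij in
lemma step_herm (A : Matrix (Fin n) (Fin n) ℂ) (h : A.IsHermitian) :
    (Rᴴ * A * R).IsHermitian := by
  unfold Matrix.IsHermitian
  rw [Matrix.conjTranspose_mul, Matrix.conjTranspose_mul, Matrix.conjTranspose_conjTranspose,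
    h.eq, Matrix.mul_assoc]

end step

def tri : ℕ → ℕ
  | 0 => 0
  | (j+1) => tri j + j

lemma tri_mono : ∀ {a b : ℕ}, a ≤ b → tri a ≤ tri b := by
  intro a b h
  induction b with
  | zero => simpa [Nat.le_zero.mp h]
  | succ b ih =>
    rcases Nat.lt_or_ge a (b+1) with h'|h'
    · exact le_trans (ih (Nat.lt_succ_iff.mp h')) (by simp [tri])
    · have : a = b+1 := le_antisymm h h'
      subst this; rfl

lemma filt_map_val (n : ℕ) : ∀ m : ℕ,
    (((List.finRange n).filter (fun i : Fin n => decide (i.val < m))).map Fin.val) = List.range (min m n) := by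
  induction n with
  | zero => intro m; simp
  | succ n ih =>
    intro m
    rw [List.finRange_succ]
    cases m with
    | zero => simp
    | succ m =>
      rw [List.filter_cons]
      have h0 : (decide ((0 : Fin (n+1)).val < m+1)) = true := by simp
      rw [h0, if_pos rfl]
      rw [List.filter_map]
      have hpred : ((fun i : Fin (n+1) => decide (i.val < m+1)) ∘ Fin.succ) = (fun i : Fin n => decide (i.val < m)) := by
        funext i
        simp [Function.comp, Fin.val_succ, Nat.succ_lt_succ_iff]
      rw [hpred]
      have hmin : min (m+1) (n+1) = (min m n) + 1 := Nat.succ_min_succ m n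
      rw [hmin, List.range_succ_eq_map]
      simp only [List.map_cons, List.map_map]
      congr 1
      · rw [← ih m, List.map_map]
        apply List.map_congr_left
        intro a _
        simp [Function.comp, Fin.val_succ]

lemma filt_length (n m : ℕ) (h : m ≤ n) :
    ((List.finRange n).filter (fun i : Fin n => decide (i.val < m))).length = m := by
  have := congrArg List.length (filt_map_val n m)
  simpa [Nat.min_eq_left h] using this

lemma filt_getElem (n m : ℕ) (h : m ≤ n) (k : ℕ) (hk : k < m) :
    ((List.finRange n).filter (fun i : Fin n => decide (i.val < m)))[k]'(by rw [filt_length n m h]; exact hk)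
      = ⟨k, lt_of_lt_of_le hk h⟩ := by
  apply Fin.ext
  have hlen : k < (((List.finRange n).filter (fun i : Fin n => decide (i.val < m))).map Fin.val).length := by
    rw [List.length_map, filt_length n m h]; exact hk
  have h1 : (((List.finRange n).filter (fun i : Fin n => decide (i.val < m))).map Fin.val)[k] =
      (List.range (min m n))[k]'(by rw [List.length_range]; omega) := by
    congr 1 <;> rw [filt_map_val]
  rw [List.getElem_map] at h1
  rw [h1, List.getElem_range]

def colList {n : ℕ} (j : Fin n) : List (Fin n × Fin n) :=
  ((List.finRange n).filter fun i => i < j).map fun i => (i, j)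

lemma colCyclicPairs_eq (n : ℕ) : colCyclicPairs n = (List.finRange n).flatMap colList := rfl

lemma colList_filter_eq {n : ℕ} (j : Fin n) :
    ((List.finRange n).filter fun i => i < j)
      = ((List.finRange n).filter (fun i : Fin n => decide (i.val < j.val))) := rfl

lemma colList_length {n : ℕ} (j : Fin n) : (colList j).length = j.val := by
  unfold colList
  rw [List.length_map, colList_filter_eq, filt_length n j.val (le_of_lt j.isLt)]

lemma colList_getElem {n : ℕ} (j : Fin n) (i : ℕ) (hi : i < j.val) :
    (colList j)[i]'(by rw [colList_length]; exact hi)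
      = (⟨i, lt_trans hi j.isLt⟩, j) := by
  unfold colList
  rw [List.getElem_map]
  congr 1
  rw [List.getElem_of_eq (colList_filter_eq j), filt_getElem n j.val (le_of_lt j.isLt) i hi]

def preCols (n m : ℕ) : List (Fin n × Fin n) := ((List.finRange n).take m).flatMap colList

lemma preCols_succ (n m : ℕ) (hm : m < n) :
    preCols n (m+1) = preCols n m ++ colList ⟨m, hm⟩ := by
  unfold preCols
  rw [List.take_succ, List.flatMap_append]
  congr
  have h1 : (List.finRange n)[m]? = some ⟨m, hm⟩ := by
    rw [List.getElem?_eq_getElem (by simpa using hm), List.getElem_finRange]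
    congr 1
  rw [h1]
  simp

lemma preCols_length (n : ℕ) : ∀ m : ℕ, m ≤ n → (preCols n m).length = tri m := by
  intro m
  induction m with
  | zero => intro _; simp [preCols, tri]
  | succ m ih =>
    intro h
    rw [preCols_succ n m (by omega), List.length_append, ih (by omega), colList_length]
    rfl

lemma preCols_full (n : ℕ) : preCols n n = colCyclicPairs n := by
  rw [colCyclicPairs_eq, preCols]
  congr
  exact List.take_of_length_le (by simp)

lemma length_colCyclicPairs (n : ℕ) : (colCyclicPairs n).length = tri n := by
  rw [← preCols_full, preCols_length n n le_rfl]

lemma tri_add_lt (n m i : ℕ) (hm : m < n) (hi : i < m) : tri m + i < tri n := by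
  have h1 : tri m + i < tri (m+1) := by simp only [tri]; omega
  exact lt_of_lt_of_le h1 (tri_mono hm)

lemma colCyclic_getElem (n m i : ℕ) (hm : m < n) (hi : i < m) :
    (colCyclicPairs n)[tri m + i]'(by rw [length_colCyclicPairs]; exact tri_add_lt n m i hm hi)
      = (⟨i, by omega⟩, ⟨m, hm⟩) := by
  have hsplit : colCyclicPairs n = (preCols n m ++ colList (⟨m, hm⟩ : Fin n))
      ++ ((List.finRange n).drop (m+1)).flatMap colList := by
    rw [← preCols_succ n m hm, colCyclicPairs_eq, preCols, ← List.flatMap_append,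
      List.take_append_drop]
  rw [List.getElem_of_eq hsplit]
  have hlen1 : (preCols n m ++ colList (⟨m, hm⟩ : Fin n)).length = tri m + m := by
    rw [List.length_append, preCols_length n m (by omega), colList_length]
  have hin : tri m + i < (preCols n m ++ colList (⟨m, hm⟩ : Fin n)).length := by omega
  rw [List.getElem_append_left hin]
  have hpre : (preCols n m).length = tri m := preCols_length n m (by omega)
  have hge : (preCols n m).length ≤ tri m + i := by omega
  rw [List.getElem_append_right hge]
  have hidx : tri m + i - (preCols n m).length = i := by omega
  have : (colList (⟨m, hm⟩ : Fin n))[tri m + i - (preCols n m).length]'(by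
      rw [colList_length, hpre]; simp only [Fin.val_mk]; omega) = (colList (⟨m, hm⟩ : Fin n))[i]'(by
      rw [colList_length]; exact hi) := by
    congr 1
  rw [this, colList_getElem ⟨m, hm⟩ i hi]

lemma tri_decomp : ∀ (M k : ℕ), k < tri M → ∃ m i : ℕ, i < m ∧ m < M ∧ k = tri m + i := by
  intro M
  induction M with
  | zero => intro k hk; simp [tri] at hk
  | succ M ih =>
    intro k hk
    rcases Nat.lt_or_ge k (tri M) with h|h
    · obtain ⟨m, i, h1, h2, h3⟩ := ih k h
      exact ⟨m, i, h1, by omega, h3⟩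
    · refine ⟨M, k - tri M, ?_, by omega, by omega⟩
      have : tri (M+1) = tri M + M := rfl
      omega

lemma Soff_nonneg {n : ℕ} (S : Finset (Fin n)) (X : Matrix (Fin n) (Fin n) ℂ) : 0 ≤ Soff S X := by
  apply Finset.sum_nonneg
  intro r _
  apply Finset.sum_nonneg
  intro t _
  by_cases h : r = t <;> simp [h] <;> positivity

lemma Soff_insert {n : ℕ} (S : Finset (Fin n)) (a : Fin n) (ha : a ∉ S)
    (X : Matrix (Fin n) (Fin n) ℂ) :
    Soff (insert a S) X = Soff S X + ∑ r ∈ S, (‖X r a‖^2 + ‖X a r‖^2) := by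
  unfold Soff
  rw [Finset.sum_insert ha]
  have hinner_a : ∑ t ∈ insert a S, (if a = t then 0 else ‖X a t‖^2)
      = ∑ t ∈ S, ‖X a t‖^2 := by
    rw [Finset.sum_insert ha, if_pos rfl, zero_add]
    apply Finset.sum_congr rfl
    intro t ht
    rw [if_neg]
    intro h; exact ha (h ▸ ht)
  have hinner : ∀ r ∈ S, ∑ t ∈ insert a S, (if r = t then 0 else ‖X r t‖^2)
      = ‖X r a‖^2 + ∑ t ∈ S, (if r = t then 0 else ‖X r t‖^2) := by
    intro r hr
    rw [Finset.sum_insert ha, if_neg]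
    intro h; exact ha (h ▸ hr)
  rw [hinner_a, Finset.sum_congr rfl hinner, Finset.sum_add_distrib, Finset.sum_add_distrib]
  ring

lemma sq_lb (p a b : ℝ) (hp : 0 ≤ p) (ha : 0 ≤ a) (hb : 0 ≤ b) (h : a - b ≤ p) :
    a^2/2 - b^2 ≤ p^2 := by
  rcases le_or_gt a b with h'|h'
  · nlinarith
  · nlinarith [sq_nonneg (a - 2*b)]

lemma sum_range_add' (f : ℕ → ℝ) (T : ℕ) : ∀ m : ℕ,
    ∑ l ∈ Finset.range (T + m), f l = ∑ l ∈ Finset.range T, f l + ∑ i ∈ Finset.range m, f (T + i) := by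
  intro m
  induction m with
  | zero => simp
  | succ m ih =>
    have : T + (m+1) = (T + m) + 1 := by omega
    rw [this, Finset.sum_range_succ, ih, Finset.sum_range_succ]
    ring

set_option maxHeartbeats 1600000 in
theorem stmt_14 (n : ℕ) (hn : 2 ≤ n) (ν : ℝ) (hν : 0 < ν) :
    ∃ γ : ℝ, 0 ≤ γ ∧ γ < 1 ∧
      ∀ (A : ℕ → Matrix (Fin n) (Fin n) ℂ) (φ α : ℕ → ℝ),
        (A 0).IsHermitian →
        (∀ k (hk : k < (colCyclicPairs n).length), ν ≤ |Real.cos (φ k)|) →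
        (∀ k (hk : k < (colCyclicPairs n).length),
          A (k + 1) =
            (planeRot n ((colCyclicPairs n).get ⟨k, hk⟩).1 ((colCyclicPairs n).get ⟨k, hk⟩).2
                (φ k) (α k))ᴴ *
              A k *
              planeRot n ((colCyclicPairs n).get ⟨k, hk⟩).1 ((colCyclicPairs n).get ⟨k, hk⟩).2
                (φ k) (α k)) →
        (∀ k (hk : k < (colCyclicPairs n).length),
          A (k + 1) ((colCyclicPairs n).get ⟨k, hk⟩).1 ((colCyclicPairs n).get ⟨k, hk⟩).2 = 0) →
        offNormSq (A (colCyclicPairs n).length) ≤ γ * offNormSq (A 0) := by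
  have hn0 : 0 < n := by omega
  set ν' : ℝ := min ν 1 with hν'def
  have hν'0 : 0 < ν' := lt_min hν one_pos
  have hν'1 : ν' ≤ 1 := min_le_right ν 1
  have hνν : ν' ≤ ν := min_le_left ν 1
  set κ : ℝ := (ν' ^ n) ^ 2 / (8 * n) with hκdef
  have hnR : (2:ℝ) ≤ (n:ℝ) := by exact_mod_cast hn
  have hκ0 : 0 < κ := by
    apply div_pos (by positivity) (by linarith)
  have hc2 : (ν' ^ n) ^ 2 = 8 * n * κ := by
    rw [hκdef]; field_simp
  have hκhalf : κ ≤ 1/2 := by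
    rw [hκdef]
    rw [div_le_iff₀ (by linarith)]
    have h1 : (ν' ^ n) ^ 2 ≤ 1 := by
      have := pow_le_one₀ (le_of_lt hν'0) hν'1 (n := n)
      nlinarith [pow_nonneg (le_of_lt hν'0) n]
    nlinarith
  refine ⟨1 - κ ^ (n-1), ?_, ?_, ?_⟩
  · have : κ ^ (n-1) ≤ 1 := pow_le_one₀ (le_of_lt hκ0) (by linarith)
    linarith
  · have : 0 < κ ^ (n-1) := pow_pos hκ0 _
    linarith
  intro A φ α hH hcos hstep hz
  set P : ℕ → Fin n × Fin n :=
    fun k => (colCyclicPairs n).getD k (⟨0, hn0⟩, ⟨0, hn0⟩) with hPdef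
  have hNlen : (colCyclicPairs n).length = tri n := length_colCyclicPairs n
  have hPg : ∀ (k : ℕ) (hk : k < (colCyclicPairs n).length),
      P k = (colCyclicPairs n).get ⟨k, hk⟩ := by
    intro k hk
    rw [hPdef]
    simp only [List.getD_eq_getElem _ _ hk, List.get_eq_getElem]
  have hstep' : ∀ k, k < tri n → A (k+1) =
      (planeRot n (P k).1 (P k).2 (φ k) (α k))ᴴ * A k * planeRot n (P k).1 (P k).2 (φ k) (α k) := by
    intro k hk
    have hk' : k < (colCyclicPairs n).length := by omega
    rw [hPg k hk']
    exact hstep k hk'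
  have hzero' : ∀ k, k < tri n → A (k+1) (P k).1 (P k).2 = 0 := by
    intro k hk
    have hk' : k < (colCyclicPairs n).length := by omega
    rw [hPg k hk']
    exact hz k hk'
  have hcos' : ∀ k, k < tri n → ν' ≤ |Real.cos (φ k)| := by
    intro k hk
    exact le_trans hνν (hcos k (by omega))
  have hpv : ∀ (m i : ℕ) (hm : m < n) (hi : i < m),
      P (tri m + i) = (⟨i, by omega⟩, ⟨m, hm⟩) := by
    intro m i hm hi
    rw [hPdef]
    simp only []
    rw [List.getD_eq_getElem _ _ (by rw [hNlen]; exact tri_add_lt n m i hm hi)]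
    exact colCyclic_getElem n m i hm hi
  have hpvlt : ∀ (M : ℕ), M ≤ n → ∀ k, k < tri M →
      (P k).1.val < (P k).2.val ∧ (P k).2.val < M := by
    intro M hM k hk
    obtain ⟨m, i, h1, h2, h3⟩ := tri_decomp M k hk
    subst h3
    rw [hpv m i (by omega) h1]
    exact ⟨by simpa using h1, by simpa using h2⟩
  have hPne : ∀ k, k < tri n → (P k).1 ≠ (P k).2 := by
    intro k hk
    have := (hpvlt n le_rfl k hk).1
    exact Fin.ne_of_val_ne (by omega)
  have hherm : ∀ k, k ≤ tri n → (A k).IsHermitian := by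
    intro k
    induction k with
    | zero => intro _; exact hH
    | succ k ih =>
      intro hk
      rw [hstep' k (by omega)]
      exact step_herm (P k).1 (P k).2 (φ k) (α k) (A k) (ih (by omega))
  have hji : ∀ k, k < tri n → A (k+1) (P k).2 (P k).1 = 0 := by
    intro k hk
    have hh := hherm (k+1) (by omega)
    have heq : A (k+1) (P k).2 (P k).1
        = star (A (k+1) (P k).1 (P k).2) := by
      conv_lhs => rw [← hh.eq]
      rw [Matrix.conjTranspose_apply]
    rw [heq, hzero' k hk, star_zero]
  set Sf : ℕ → Finset (Fin n) := fun m => Finset.univ.filter (fun t : Fin n => t.val < m)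
    with hSfdef
  have hmemS : ∀ (m : ℕ) (t : Fin n), t ∈ Sf m ↔ t.val < m := by
    intro m t; simp [hSfdef]
  have hSins : ∀ (q : ℕ) (hq : q < n), Sf (q+1) = insert (⟨q, hq⟩ : Fin n) (Sf q) := by
    intro q hq
    ext t
    simp only [hSfdef, Finset.mem_filter, Finset.mem_univ, true_and, Finset.mem_insert,
      Fin.ext_iff]
    omega
  have hS0 : Sf 0 = ∅ := by
    ext t; simp [hSfdef]
  set dp : ℕ → ℝ := fun l => ‖A l (P l).1 (P l).2‖^2 + ‖A l (P l).2 (P l).1‖^2 with hdpdef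
  have hdpl : ∀ l, dp l = ‖A l (P l).1 (P l).2‖^2 + ‖A l (P l).2 (P l).1‖^2 := by
    intro l; rw [hdpdef]
  have hdp0 : ∀ l, 0 ≤ dp l := by
    intro l; rw [hdpl]; positivity
  have hdrop : ∀ (St : Finset (Fin n)) (k : ℕ), k < tri n → (P k).1 ∈ St → (P k).2 ∈ St →
      Soff St (A (k+1)) = Soff St (A k) - dp k := by
    intro St k hk h1 h2
    have hij := hPne k hk
    have hz1 : ((planeRot n (P k).1 (P k).2 (φ k) (α k))ᴴ * A k
        * planeRot n (P k).1 (P k).2 (φ k) (α k)) (P k).1 (P k).2 = 0 := by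
      rw [← hstep' k hk]; exact hzero' k hk
    have hz2 : ((planeRot n (P k).1 (P k).2 (φ k) (α k))ᴴ * A k
        * planeRot n (P k).1 (P k).2 (φ k) (α k)) (P k).2 (P k).1 = 0 := by
      rw [← hstep' k hk]; exact hji k hk
    rw [hstep' k hk, step_drop (P k).1 (P k).2 hij (φ k) (α k) (A k) St h1 h2 hz1 hz2, hdpl]
    ring
  have hD : ∀ (M : ℕ), M ≤ n → ∀ k, k ≤ tri M →
      Soff (Sf M) (A k) = Soff (Sf M) (A 0) - ∑ l ∈ Finset.range k, dp l := by
    intro M hM k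
    induction k with
    | zero => intro _; simp
    | succ k ih =>
      intro hk
      have hk' : k < tri M := by omega
      have hkn : k < tri n := lt_of_lt_of_le hk' (tri_mono hM)
      have hlt := hpvlt M hM k hk'
      rw [Finset.sum_range_succ,
        hdrop (Sf M) k hkn ((hmemS M _).mpr (by omega)) ((hmemS M _).mpr hlt.2),
        ih (by omega)]
      ring
  have hW : ∀ (m : ℕ) (hm : m < n), ∀ k, k ≤ tri m →
      ∑ r ∈ Sf m, ‖A k r ⟨m, hm⟩‖^2 = ∑ r ∈ Sf m, ‖A 0 r ⟨m, hm⟩‖^2 := by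
    intro m hm k
    induction k with
    | zero => intro _; rfl
    | succ k ih =>
      intro hk
      have hk' : k < tri m := by omega
      have hkn : k < tri n := lt_of_lt_of_le hk' (tri_mono (le_of_lt hm))
      have hlt := hpvlt m (le_of_lt hm) k hk'
      rw [hstep' k hkn,
        step_col_preserve (P k).1 (P k).2 (hPne k hkn) (φ k) (α k) (A k) ⟨m, hm⟩
          (Fin.ne_of_val_ne (by simp only [Fin.val_mk]; omega))
          (Fin.ne_of_val_ne (by simp only [Fin.val_mk]; omega)) (Sf m)
          ((hmemS m _).mpr (by omega)) ((hmemS m _).mpr hlt.2)]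
      exact ih (by omega)
  have hsumS : ∀ (f : ℕ → ℝ) (M : ℕ), M ≤ n →
      ∑ r ∈ Sf M, f r.val = ∑ i ∈ Finset.range M, f i := by
    intro f M
    induction M with
    | zero => intro _; rw [hS0]; simp
    | succ M ih =>
      intro hM
      rw [hSins M (by omega), Finset.sum_insert (by
        intro hmem
        have := (hmemS M _).mp hmem
        simp at this), ih (by omega), Finset.sum_range_succ]
      ring
  -- main induction over columns
  have main : ∀ m : ℕ, 1 ≤ m → m ≤ n →
      Soff (Sf m) (A (tri m)) ≤ (1 - κ^(m-1)) * Soff (Sf m) (A 0) := by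
    intro m
    induction m with
    | zero => intro h; omega
    | succ m ih =>
      intro _ hmn
      rcases Nat.eq_zero_or_pos m with hm0 | hm1
      · subst hm0
        have hS1 : ∀ X : Matrix (Fin n) (Fin n) ℂ, Soff (Sf 1) X = 0 := by
          intro X
          apply Finset.sum_eq_zero
          intro r hr
          apply Finset.sum_eq_zero
          intro t ht
          have h1 := (hmemS 1 r).mp hr
          have h2 := (hmemS 1 t).mp ht
          rw [if_pos (Fin.ext (by omega))]
        rw [hS1, hS1]
        simp
      · -- inductive step: m ≥ 1, m < n
        have hm : m < n := by omega
        have IH := ih hm1 (le_of_lt hm)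
        set T := tri m with hTdef
        have hT1 : tri (m+1) = T + m := rfl
        have hTn : tri (m+1) ≤ tri n := tri_mono hmn
        have hTltn : T ≤ tri n := le_trans (by omega) hTn
        set jF : Fin n := ⟨m, hm⟩ with hjFdef
        set d : ℝ := κ^(m-1) with hddef
        have hd0 : 0 < d := pow_pos hκ0 _
        have hd1 : d ≤ 1 := pow_le_one₀ (le_of_lt hκ0) (by linarith)
        have hκm : κ^((m+1)-1) = d * κ := by
          rw [hddef, ← pow_succ]
          congr 1
          omega
        set B0 : ℝ := Soff (Sf m) (A 0) with hB0def
        set KT : ℝ := Soff (Sf m) (A T) with hKTdef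
        set W0 : ℝ := ∑ r ∈ Sf m, ‖A 0 r jF‖^2 with hW0def
        have hWT : ∑ r ∈ Sf m, ‖A T r jF‖^2 = W0 := hW m hm T le_rfl
        have hB0nn : 0 ≤ B0 := Soff_nonneg _ _
        have hKTnn : 0 ≤ KT := Soff_nonneg _ _
        have hW0nn : 0 ≤ W0 := by
          rw [hW0def]; positivity
        have hKTle : KT ≤ (1 - d) * B0 := IH
        have hjFnot : jF ∉ Sf m := by
          intro hmem
          have := (hmemS m jF).mp hmem
          simp [hjFdef] at this
        have hsplitX : ∀ k, k ≤ tri n → Soff (Sf (m+1)) (A k)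
            = Soff (Sf m) (A k) + 2 * ∑ r ∈ Sf m, ‖A k r jF‖^2 := by
          intro k hk
          rw [hSins m hm, Soff_insert (Sf m) jF hjFnot (A k)]
          have hconj : ∀ r ∈ Sf m, ‖A k r jF‖^2 + ‖A k jF r‖^2 = 2 * ‖A k r jF‖^2 := by
            intro r _
            have hh := hherm k hk
            have : A k jF r = star (A k r jF) := by
              conv_lhs => rw [← hh.eq]
              rw [Matrix.conjTranspose_apply]
            rw [this, norm_star]
            ring
          rw [Finset.sum_congr rfl hconj, ← Finset.mul_sum]
        have hB0' : Soff (Sf (m+1)) (A 0) = B0 + 2 * W0 := hsplitX 0 (Nat.zero_le _)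
        have hKT' : Soff (Sf (m+1)) (A T) = KT + 2 * W0 := by
          rw [hsplitX T hTltn, hWT]
        set DS : ℝ := ∑ i ∈ Finset.range m, dp (T + i) with hDSdef
        have hDS0 : 0 ≤ DS := by
          rw [hDSdef]
          exact Finset.sum_nonneg fun i _ => hdp0 _
        have hfinal : Soff (Sf (m+1)) (A (T + m)) = KT + 2 * W0 - DS := by
          have h1 := hD (m+1) hmn (T+m) (by omega)
          have h2 := hD (m+1) hmn T (by omega)
          rw [sum_range_add' dp T m] at h1
          rw [hKT'] at h2
          rw [hDSdef]
          linarith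
        -- within-column entry stability
        have hstab : ∀ (r : Fin n), r.val < m → ∀ (q : ℕ) (hq : q < r.val) (u : ℕ), u ≤ q →
            A (T + u) r ⟨q, by omega⟩ = A T r ⟨q, by omega⟩ := by
          intro r hrm q hq u
          induction u with
          | zero => intro _; rfl
          | succ u ihu =>
            intro hu
            have hun : T + u < tri n := by
              have : T + u < tri (m+1) := by omega
              omega
            have hpvu : P (T + u) = (⟨u, by omega⟩, jF) := hpv m u hm (by omega)
            have hstepu : A (T + u + 1) =
                (planeRot n ⟨u, by omega⟩ jF (φ (T+u)) (α (T+u)))ᴴ * A (T+u)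
                  * planeRot n ⟨u, by omega⟩ jF (φ (T+u)) (α (T+u)) := by
              rw [hstep' (T+u) hun, hpvu]
            rw [(Nat.add_assoc T u 1).symm, hstepu,
              step_unchanged ⟨u, by omega⟩ jF (Fin.ne_of_val_ne (by simp [hjFdef]; omega))
                (φ (T+u)) (α (T+u)) (A (T+u)) r ⟨q, by omega⟩
                (Fin.ne_of_val_ne (by simp; omega)) (Fin.ne_of_val_ne (by simp [hjFdef]; omega))
                (Fin.ne_of_val_ne (by simp; omega)) (Fin.ne_of_val_ne (by simp [hjFdef]; omega))]
            exact ihu (by omega)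
        -- recurrence along the column
        have hrec : ∀ (r : Fin n), r.val < m → ∀ q, q ≤ r.val →
            ν'^q * ‖A T r jF‖ - (∑ t ∈ Sf q, ‖A T r t‖) ≤ ‖A (T + q) r jF‖ := by
          intro r hrm q
          induction q with
          | zero => intro _; rw [hS0]; simp
          | succ q ihq =>
            intro hq
            have hq' : q < r.val := by omega
            have hqn : T + q < tri n := by
              have : T + q < tri (m+1) := by omega
              omega
            have hpvq : P (T + q) = (⟨q, by omega⟩, jF) := hpv m q hm (by omega)
            have hstepq : A (T + q + 1) =
                (planeRot n ⟨q, by omega⟩ jF (φ (T+q)) (α (T+q)))ᴴ * A (T+q)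
                  * planeRot n ⟨q, by omega⟩ jF (φ (T+q)) (α (T+q)) := by
              rw [hstep' (T+q) hqn, hpvq]
            have hupd : A (T + q + 1) r jF =
                -(Complex.exp ((α (T+q)) * Complex.I)) * (Real.sin (φ (T+q)) : ℂ)
                    * A (T+q) r ⟨q, by omega⟩
                  + (Real.cos (φ (T+q)) : ℂ) * A (T+q) r jF := by
              rw [hstepq]
              exact step_update ⟨q, by omega⟩ jF (Fin.ne_of_val_ne (by simp [hjFdef]; omega))
                (φ (T+q)) (α (T+q)) (A (T+q)) r
                (Fin.ne_of_val_ne (by simp; omega)) (Fin.ne_of_val_ne (by simp [hjFdef]; omega))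
            have hstabq : A (T+q) r ⟨q, by omega⟩ = A T r ⟨q, by omega⟩ :=
              hstab r hrm q hq' q le_rfl
            rw [(Nat.add_assoc T q 1).symm, hupd, hstabq]
            set X := A T r ⟨q, by omega⟩ with hXdef
            set Y := A (T+q) r jF with hYdef
            set ee := Complex.exp ((α (T+q)) * Complex.I) with heedef
            have hYlb := ihq (by omega)
            have htri : ‖(Real.cos (φ (T+q)) : ℂ) * Y‖ ≤ ‖-ee * (Real.sin (φ (T+q)) : ℂ) * X
                + (Real.cos (φ (T+q)) : ℂ) * Y‖ + ‖ee * (Real.sin (φ (T+q)) : ℂ) * X‖ := by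
              have : (Real.cos (φ (T+q)) : ℂ) * Y =
                  (-ee * (Real.sin (φ (T+q)) : ℂ) * X + (Real.cos (φ (T+q)) : ℂ) * Y)
                    + ee * (Real.sin (φ (T+q)) : ℂ) * X := by ring
              conv_lhs => rw [this]
              exact norm_add_le _ _
            have hcY : ‖(Real.cos (φ (T+q)) : ℂ) * Y‖ = |Real.cos (φ (T+q))| * ‖Y‖ := by
              rw [norm_mul, Complex.norm_real, Real.norm_eq_abs]
            have hcY2 : ν' * ‖Y‖ ≤ ‖(Real.cos (φ (T+q)) : ℂ) * Y‖ := by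
              rw [hcY]
              exact mul_le_mul_of_nonneg_right (hcos' (T+q) hqn) (norm_nonneg _)
            have hsX : ‖ee * (Real.sin (φ (T+q)) : ℂ) * X‖ ≤ ‖X‖ := by
              rw [norm_mul, norm_mul, heedef, norm_ep, one_mul, Complex.norm_real,
                Real.norm_eq_abs]
              nlinarith [Real.abs_sin_le_one (φ (T+q)), norm_nonneg X, abs_nonneg (Real.sin (φ (T+q)))]
            have hEq : ∑ t ∈ Sf (q+1), ‖A T r t‖ = (∑ t ∈ Sf q, ‖A T r t‖) + ‖X‖ := by
              rw [hSins q (by omega), Finset.sum_insert (by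
                intro hmem
                have := (hmemS q _).mp hmem
                simp at this)]
              rw [hXdef]
              ring
            have hEnn : 0 ≤ ∑ t ∈ Sf q, ‖A T r t‖ :=
              Finset.sum_nonneg fun t _ => norm_nonneg _
            have hYmul : ν' * (ν'^q * ‖A T r jF‖ - ∑ t ∈ Sf q, ‖A T r t‖) ≤ ν' * ‖Y‖ :=
              mul_le_mul_of_nonneg_left hYlb (le_of_lt hν'0)
            rw [hEq]
            have hpow : ν'^(q+1) = ν'^q * ν' := pow_succ ν' q
            nlinarith [norm_nonneg (A T r jF), pow_nonneg (le_of_lt hν'0) q]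
        -- per-pivot lower bound
        have hkey : ∀ r ∈ Sf m, ((ν'^n)^2 / 2) * ‖A T r jF‖^2
            - n * (∑ t ∈ Sf r.val, ‖A T r t‖^2) ≤ dp (T + r.val) := by
          intro r hr
          have hrm := (hmemS m r).mp hr
          have hpvr : P (T + r.val) = (r, jF) := by
            have h := hpv m r.val hm hrm
            rw [h]
          have hdpr : dp (T + r.val) = ‖A (T + r.val) r jF‖^2 + ‖A (T + r.val) jF r‖^2 := by
            rw [hdpl, hpvr]
          have hp := hrec r hrm r.val le_rfl
          have hmono : ν'^n ≤ ν'^(r.val) :=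
            pow_le_pow_of_le_one (le_of_lt hν'0) hν'1 (by omega)
          have hwnn : (0:ℝ) ≤ ‖A T r jF‖ := norm_nonneg _
          have hEnn : 0 ≤ ∑ t ∈ Sf r.val, ‖A T r t‖ :=
            Finset.sum_nonneg fun t _ => norm_nonneg _
          have hplb : ν'^n * ‖A T r jF‖ - (∑ t ∈ Sf r.val, ‖A T r t‖)
              ≤ ‖A (T + r.val) r jF‖ := by
            have : ν'^n * ‖A T r jF‖ ≤ ν'^(r.val) * ‖A T r jF‖ :=
              mul_le_mul_of_nonneg_right hmono hwnn
            linarith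
          have hsq := sq_lb (‖A (T + r.val) r jF‖) (ν'^n * ‖A T r jF‖)
            (∑ t ∈ Sf r.val, ‖A T r t‖) (norm_nonneg _)
            (mul_nonneg (pow_nonneg (le_of_lt hν'0) n) hwnn) hEnn hplb
          have hE2 : (∑ t ∈ Sf r.val, ‖A T r t‖)^2 ≤ n * (∑ t ∈ Sf r.val, ‖A T r t‖^2) := by
            have h1 := sq_sum_le_card_mul_sum_sq (s := Sf r.val) (f := fun t => ‖A T r t‖)
            have h2 : ((Sf r.val).card : ℝ) ≤ n := by
              have := Finset.card_le_univ (Sf r.val)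
              have hcard : (Finset.univ : Finset (Fin n)).card = n := by simp
              exact_mod_cast le_trans this (le_of_eq hcard)
            have h3 : 0 ≤ ∑ t ∈ Sf r.val, ‖A T r t‖^2 :=
              Finset.sum_nonneg fun t _ => sq_nonneg _
            nlinarith
          rw [hdpr]
          nlinarith [sq_nonneg (‖A (T + r.val) jF r‖), sq_nonneg (ν'^n * ‖A T r jF‖)]
        -- sum the per-pivot bounds
        have hEsq_sum : ∑ r ∈ Sf m, (∑ t ∈ Sf r.val, ‖A T r t‖^2) ≤ KT := by
          rw [hKTdef]
          have : Soff (Sf m) (A T)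
              = ∑ r ∈ Sf m, ∑ t ∈ Sf m, (if r = t then 0 else ‖A T r t‖^2) := rfl
          rw [this]
          apply Finset.sum_le_sum
          intro r hr
          have hrm := (hmemS m r).mp hr
          have hsub : Sf r.val ⊆ Sf m := by
            intro t ht
            exact (hmemS m t).mpr (by have := (hmemS r.val t).mp ht; omega)
          calc ∑ t ∈ Sf r.val, ‖A T r t‖^2
              = ∑ t ∈ Sf r.val, (if r = t then 0 else ‖A T r t‖^2) := by
                apply Finset.sum_congr rfl
                intro t ht
                rw [if_neg]
                intro h
                have := (hmemS r.val t).mp ht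
                rw [← h] at this
                omega
            _ ≤ ∑ t ∈ Sf m, (if r = t then 0 else ‖A T r t‖^2) := by
                apply Finset.sum_le_sum_of_subset_of_nonneg hsub
                intro t _ _
                by_cases h : r = t
                · rw [if_pos h]
                · rw [if_neg h]; positivity
        have hDSsum : DS = ∑ r ∈ Sf m, dp (T + r.val) := by
          rw [hDSdef, hsumS (fun i => dp (T + i)) m (le_of_lt hm)]
        have hDlb : ((ν'^n)^2 / 2) * W0 - n * KT ≤ DS := by
          rw [hDSsum]
          have h1 := Finset.sum_le_sum hkey
          rw [Finset.sum_sub_distrib, ← Finset.mul_sum, ← Finset.mul_sum, hWT] at h1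
          have h2 : ∑ r ∈ Sf m, (∑ t ∈ Sf r.val, ‖A T r t‖^2) ≤ KT := hEsq_sum
          nlinarith [hnR]
        -- final assembly
        have hgoal_eq : Soff (Sf (m+1)) (A (tri (m+1))) = KT + 2*W0 - DS := by
          rw [hT1]; exact hfinal
        rw [hgoal_eq, hB0', hκm]
        have hcomb' : d * (((ν'^n)^2 / 2) * W0 - n * KT) ≤ 2 * n * DS := by
          have h1 : d * (((ν'^n)^2 / 2) * W0 - n * KT) ≤ d * DS :=
            mul_le_mul_of_nonneg_left hDlb (le_of_lt hd0)
          nlinarith [hDS0, hnR]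
        have s1 : (2 + d) * KT ≤ (2 + d) * ((1 - d) * B0) :=
          mul_le_mul_of_nonneg_left hKTle (by linarith)
        have s2 : (2 + d) * ((1 - d) * B0) ≤ 2 * (1 - κ * d) * B0 := by
          have hfact : 0 ≤ d * ((1 - 2*κ + d) * B0) :=
            mul_nonneg (le_of_lt hd0) (mul_nonneg (by linarith) hB0nn)
          nlinarith [hfact]
        have s3 : (n:ℝ) * ((2 + d) * KT) ≤ (n:ℝ) * (2 * (1 - κ * d) * B0) :=
          mul_le_mul_of_nonneg_left (le_trans s1 s2) (show (0:ℝ) ≤ (n:ℝ) by linarith)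
        have key2 : 2 * (n:ℝ) * (KT + 2*W0 - DS) ≤ 2 * n * ((1 - d * κ) * (B0 + 2*W0)) := by
          rw [hc2] at hcomb'
          nlinarith [hW0nn, hnR]
        have hpos : (0:ℝ) < 2 * n := by linarith
        nlinarith [key2]
  -- conclude
  have hSfn : Sf n = Finset.univ := by
    ext t
    simp [hSfdef]
  have hoff : ∀ X : Matrix (Fin n) (Fin n) ℂ, offNormSq X = Soff Finset.univ X := by
    intro X; rfl
  have hfin := main n (by omega) le_rfl
  rw [hSfn] at hfin
  rw [hoff, hoff, hNlen]
  exact hfin
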